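/- Let E be a real inner product space and b₁,…,b_r ∈ E linearly independent with Gram–Schmidt vectors b₁^*,…,b_r^*. Then every nonzero vector v in the lattice generated by b₁,…,b_r (i.e., v = Σ_{i=1}^r x_i b_i with x_i ∈ ℤ, not all zero) satisfies ‖v‖ ≥ min_{1 ≤ i ≤ r} ‖b_i^*‖. -/

import Mathlib

open scoped InnerProductSpace

/-- The Gram–Schmidt orthogonalization `b*` of a finite family `b : Fin r → E`
(Mathlib's `gramSchmidt`, specialized to the index type `Fin r` over `ℝ`):
`b*_i = b_i - ∑_{l<i} μ_{i,l} b*_l`. -/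
noncomputable def gso {E : Type*} [NormedAddCommGroup E] [InnerProductSpace ℝ E]
    {r : ℕ} (b : Fin r → E) : Fin r → E :=
  @InnerProductSpace.gramSchmidt ℝ E _ _ _ (Fin r) _ _ (inferInstance : WellFoundedLT (Fin r)) b

/-- The Gram–Schmidt coefficient `μ_{i,l} = ⟪b_i, b*_l⟫ / ⟪b*_l, b*_l⟫`. -/
noncomputable def gsCoeff {E : Type*} [NormedAddCommGroup E] [InnerProductSpace ℝ E]
    {r : ℕ} (b : Fin r → E) (i l : Fin r) : ℝ :=
  ⟪b i, gso b l⟫_ℝ / ⟪gso b l, gso b l⟫_ℝ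

section helpers

variable {E : Type*} [NormedAddCommGroup E] [InnerProductSpace ℝ E] {r : ℕ}

lemma gso_def (b : Fin r → E) (k : Fin r) :
    gso b k = b k - ∑ i ∈ Finset.Iio k, ((ℝ ∙ gso b i).starProjection (b k) : E) :=
  @InnerProductSpace.gramSchmidt_def ℝ E _ _ _ (Fin r) _ _ (inferInstance : WellFoundedLT (Fin r)) b k

lemma gso_orthogonal (b : Fin r → E) {i j : Fin r} (h : i ≠ j) :
    ⟪gso b i, gso b j⟫_ℝ = 0 :=
  @InnerProductSpace.gramSchmidt_orthogonal ℝ E _ _ _ (Fin r) _ _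
    (inferInstance : WellFoundedLT (Fin r)) b i j h

lemma gso_inv_triangular (b : Fin r → E) {i j : Fin r} (h : i < j) :
    ⟪gso b j, b i⟫_ℝ = 0 :=
  @InnerProductSpace.gramSchmidt_inv_triangular ℝ E _ _ _ (Fin r) _ _
    (inferInstance : WellFoundedLT (Fin r)) b i j h

lemma gso_ne_zero {b : Fin r → E} (k : Fin r) (hb : LinearIndependent ℝ b) :
    gso b k ≠ 0 :=
  @InnerProductSpace.gramSchmidt_ne_zero ℝ E _ _ _ (Fin r) _ _
    (inferInstance : WellFoundedLT (Fin r)) b k hb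

lemma inner_self_gso (b : Fin r → E) (k : Fin r) :
    ⟪b k, gso b k⟫_ℝ = ⟪gso b k, gso b k⟫_ℝ := by
  rw [real_inner_comm]
  nth_rewrite 3 [gso_def b k]
  rw [inner_sub_right]
  have h0 : ⟪gso b k, ∑ i ∈ Finset.Iio k,
      ((ℝ ∙ gso b i).starProjection (b k) : E)⟫_ℝ = 0 := by
    rw [inner_sum]
    refine Finset.sum_eq_zero fun i hi => ?_
    rw [Submodule.starProjection_singleton, inner_smul_right,
      gso_orthogonal b (Finset.mem_Iio.1 hi).ne', mul_zero]
  rw [h0, sub_zero]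

end helpers

/-- Every nonzero vector `v = ∑ x_i b_i` (with `x_i ∈ ℤ`, not all zero)
of the lattice generated by the linearly independent family `b` satisfies
`‖v‖ ≥ min_i ‖b*_i‖`. -/
theorem min_gramSchmidt_norm_le_lattice_vector
    {E : Type*} [NormedAddCommGroup E] [InnerProductSpace ℝ E]
    {r : ℕ} (hr : 0 < r) (b : Fin r → E) (hb : LinearIndependent ℝ b)
    (x : Fin r → ℤ) (hx : x ≠ 0) :
    Finset.univ.inf' (Finset.univ_nonempty_iff.mpr ⟨⟨0, hr⟩⟩) (fun i => ‖gso b i‖) ≤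
      ‖∑ i, (x i : ℝ) • b i‖ := by
  classical
  set s : Finset (Fin r) := Finset.univ.filter (fun i => x i ≠ 0) with hs
  have hsne : s.Nonempty := by
    rcases Function.ne_iff.1 hx with ⟨i, hi⟩
    exact ⟨i, by simp only [hs, Finset.mem_filter, Finset.mem_univ, true_and]; simpa using hi⟩
  set k := s.max' hsne with hk
  have hxk : x k ≠ 0 := (Finset.mem_filter.1 (s.max'_mem hsne)).2
  have hgt : ∀ i, k < i → x i = 0 := by
    intro i hi
    by_contra h
    exact absurd (s.le_max' i (by simp [hs, h])) (not_le.2 hi)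
  have hgk0 : gso b k ≠ 0 := gso_ne_zero k hb
  set v := ∑ i, (x i : ℝ) • b i with hv
  have hinner : ⟪v, gso b k⟫_ℝ = (x k : ℝ) * ⟪gso b k, gso b k⟫_ℝ := by
    rw [hv, sum_inner]
    rw [Finset.sum_eq_single k]
    · rw [inner_smul_left, RCLike.conj_to_real, inner_self_gso]
    · intro i _ hik
      rcases lt_or_gt_of_ne hik with h | h
      · rw [inner_smul_left, RCLike.conj_to_real,
          real_inner_comm, gso_inv_triangular b h, mul_zero]
      · rw [hgt i h]; simp
    · simp
  have hnk : ‖gso b k‖ ≤ ‖v‖ := by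
    have hcs := abs_real_inner_le_norm v (gso b k)
    have h1 : (1 : ℝ) ≤ |(x k : ℝ)| := by
      rw [← Int.cast_abs]
      exact_mod_cast Int.one_le_abs hxk
    have hpos : 0 < ‖gso b k‖ := norm_pos_iff.2 hgk0
    have hmul : ‖gso b k‖ * ‖gso b k‖ ≤ ‖v‖ * ‖gso b k‖ := by
      calc ‖gso b k‖ * ‖gso b k‖ = 1 * ⟪gso b k, gso b k⟫_ℝ := by
            rw [one_mul, real_inner_self_eq_norm_mul_norm]
        _ ≤ |(x k : ℝ)| * ⟪gso b k, gso b k⟫_ℝ := by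
            exact mul_le_mul_of_nonneg_right h1 real_inner_self_nonneg
        _ = |⟪v, gso b k⟫_ℝ| := by
            rw [hinner, abs_mul, abs_of_nonneg real_inner_self_nonneg]
        _ ≤ ‖v‖ * ‖gso b k‖ := hcs
    exact le_of_mul_le_mul_right hmul hpos
  exact le_trans (Finset.inf'_le _ (Finset.mem_univ k)) hnk
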